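/- Let G be a strongly regular graph with parameters (n, k, 1, 2), and let n2 denote the number of induced subgraphs of G isomorphic to the graph obtained from a 4-cycle by erecting triangles on two adjacent sides (the 6-vertex graph consisting of a quadrilateral with two triangles completed on adjacent edges). Then n2 = n*k*(k-2)/2, i.e., n2 = 4 times the number of induced 4-cycles. -/

import Mathlib

/-- The number of `m`-element vertex subsets of `G` inducing a cycle of length `m`. -/
noncomputable def inducedCycleCount {V : Type*} [Fintype V] (G : SimpleGraph V) (m : ℕ) : ℕ :=
  Set.ncard {s : Finset V | s.card = m ∧
    Nonempty (G.induce (↑s : Set V) ≃g SimpleGraph.cycleGraph m)}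

/-- The 6-vertex graph obtained from the 4-cycle `0-1-2-3-0` by erecting triangles
on the two adjacent sides `01` (apex `4`) and `12` (apex `5`). -/
def squareWithTwoAdjacentTriangles : SimpleGraph (Fin 6) :=
  SimpleGraph.fromRel (fun i j =>
    (i, j) ∈ [((0 : Fin 6), (1 : Fin 6)), (1, 2), (2, 3), (3, 0), (0, 4), (1, 4), (1, 5), (2, 5)])

namespace Stmt13Aux

open Finset SimpleGraph

instance : DecidableRel squareWithTwoAdjacentTriangles.Adj := fun a b =>
  decidable_of_iff _ (SimpleGraph.fromRel_adj _ a b).symm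

variable {V : Type*} [Fintype V]

/-- `φ` is an induced-subgraph embedding of `H` into `G`. -/
def IsEmb (G : SimpleGraph V) {m : ℕ} (H : SimpleGraph (Fin m)) (φ : Fin m → V) : Prop :=
  Function.Injective φ ∧ ∀ i j, G.Adj (φ i) (φ j) ↔ H.Adj i j

section General

variable [DecidableEq V]

/-- The equivalence between `Fin m` and the image of an injective map. -/
noncomputable def embEquiv {m : ℕ} (φ : Fin m → V) (hinj : Function.Injective φ) (s : Finset V)
    (hs : Finset.image φ Finset.univ = s) : Fin m ≃ (↑s : Set V) :=
  Equiv.ofBijective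
    (fun i => ⟨φ i, by subst hs; exact Finset.mem_coe.2 (Finset.mem_image_of_mem φ (Finset.mem_univ i))⟩)
    ⟨fun i j hij => hinj (congrArg Subtype.val hij), by
      rintro ⟨x, hx⟩
      subst hs
      simp only [Finset.coe_image, Finset.coe_univ, Set.image_univ, Set.mem_range] at hx
      obtain ⟨i, hi⟩ := hx
      exact ⟨i, Subtype.ext hi⟩⟩

@[simp] lemma embEquiv_apply_coe {m : ℕ} (φ : Fin m → V) (hinj : Function.Injective φ)
    (s : Finset V) (hs : Finset.image φ Finset.univ = s) (i : Fin m) :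
    (embEquiv φ hinj s hs i : V) = φ i := rfl

variable (G : SimpleGraph V) {m : ℕ} (H : SimpleGraph (Fin m))

/-- An induced embedding with image `s` yields an isomorphism `G.induce s ≃g H`. -/
noncomputable def isoOfEmb (φ : Fin m → V) (hφ : IsEmb G H φ) (s : Finset V)
    (hs : Finset.image φ Finset.univ = s) : G.induce (↑s : Set V) ≃g H where
  toEquiv := (embEquiv φ hφ.1 s hs).symm
  map_rel_iff' := by
    intro x y
    have hx : (x : V) = φ ((embEquiv φ hφ.1 s hs).symm x) :=
      congrArg Subtype.val ((embEquiv φ hφ.1 s hs).apply_symm_apply x).symm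
    have hy : (y : V) = φ ((embEquiv φ hφ.1 s hs).symm y) :=
      congrArg Subtype.val ((embEquiv φ hφ.1 s hs).apply_symm_apply y).symm
    simp only [comap_adj, Function.Embedding.coe_subtype]
    rw [← hφ.2, ← hx, ← hy]

lemma isEmb_of_iso (s : Finset V) (χ : G.induce (↑s : Set V) ≃g H) :
    IsEmb G H (fun i => (χ.symm i : V)) ∧
      Finset.image (fun i => (χ.symm i : V)) Finset.univ = s := by
  refine ⟨⟨fun i j hij => χ.symm.injective (Subtype.ext hij), fun i j => ?_⟩, ?_⟩
  · have := χ.symm.map_rel_iff' (a := i) (b := j)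
    simp only [comap_adj, Function.Embedding.coe_subtype] at this ⊢
    exact this
  · ext x
    simp only [Finset.mem_image, Finset.mem_univ, true_and]
    constructor
    · rintro ⟨i, rfl⟩; exact (χ.symm i).2
    · intro hx
      exact ⟨χ ⟨x, hx⟩, by rw [χ.symm_apply_apply]⟩

/-- Main general counting lemma: the number of induced embeddings of `H` equals the number of
automorphisms of `H` times the number of vertex subsets inducing a copy of `H`. -/
lemma card_emb_eq_aut_mul :
    Nat.card {φ : Fin m → V // IsEmb G H φ} =
      Nat.card (H ≃g H) *
        Set.ncard {s : Finset V | s.card = m ∧ Nonempty (G.induce (↑s : Set V) ≃g H)} := by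
  classical
  set P : Finset V → Prop := fun s => s.card = m ∧ Nonempty (G.induce (↑s : Set V) ≃g H) with hP
  have hset : {s : Finset V | P s} = ↑(Finset.univ.filter P) := by
    ext s; simp
  rw [hset, Set.ncard_coe_finset]
  set E : Finset (Fin m → V) := Finset.univ.filter (IsEmb G H) with hE
  have hEcard : Nat.card {φ : Fin m → V // IsEmb G H φ} = E.card := by
    rw [Nat.card_eq_fintype_card, hE, ← Fintype.card_subtype]
  rw [hEcard]
  have hmem : ∀ φ ∈ E, Finset.image φ Finset.univ ∈ Finset.univ.filter P := by
    intro φ hφ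
    rw [hE, Finset.mem_filter] at hφ
    refine Finset.mem_filter.2 ⟨Finset.mem_univ _, ?_, ⟨isoOfEmb G H φ hφ.2 _ rfl⟩⟩
    rw [Finset.card_image_of_injective _ hφ.2.1, Finset.card_univ, Fintype.card_fin]
  rw [Finset.card_eq_sum_card_fiberwise hmem]
  have hfiber : ∀ s ∈ Finset.univ.filter P,
      (E.filter fun φ => Finset.image φ Finset.univ = s).card = Nat.card (H ≃g H) := by
    intro s hs
    rw [Finset.mem_filter] at hs
    obtain ⟨-, hcard, ⟨ψ0⟩⟩ := hs
    have e1 : (G.induce (↑s : Set V) ≃g H) ≃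
        {φ : Fin m → V // φ ∈ E.filter fun φ => Finset.image φ Finset.univ = s} := by
      refine Equiv.ofBijective (fun χ => ⟨fun i => (χ.symm i : V), ?_⟩) ⟨?_, ?_⟩
      · obtain ⟨h1, h2⟩ := isEmb_of_iso G H s χ
        exact Finset.mem_filter.2 ⟨Finset.mem_filter.2 ⟨Finset.mem_univ _, h1⟩, h2⟩
      · intro χ χ' hχ
        have hpt : ∀ i, χ.symm i = χ'.symm i := by
          intro i
          exact Subtype.ext (congrFun (congrArg Subtype.val hχ) i)
        refine RelIso.ext fun x => ?_
        have h1 := hpt (χ x)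
        rw [χ.symm_apply_apply] at h1
        have h2 := congrArg χ' h1
        rw [χ'.apply_symm_apply] at h2
        exact h2.symm
      · rintro ⟨φ, hφ⟩
        rw [Finset.mem_filter, hE, Finset.mem_filter] at hφ
        obtain ⟨⟨-, hemb⟩, himg⟩ := hφ
        refine ⟨isoOfEmb G H φ hemb s himg, ?_⟩
        apply Subtype.ext
        funext i
        rfl
    have e2 : (H ≃g H) ≃ (G.induce (↑s : Set V) ≃g H) := by
      refine Equiv.ofBijective (fun η => ψ0.trans η) ⟨?_, ?_⟩
      · intro η η' hη
        refine RelIso.ext fun x => ?_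
        have h1 := congrArg (fun χ : (G.induce (↑s : Set V) ≃g H) => χ (ψ0.symm x)) hη
        simpa using h1
      · intro χ
        refine ⟨ψ0.symm.trans χ, RelIso.ext fun x => ?_⟩
        simp
    rw [← Fintype.card_coe, ← Nat.card_eq_fintype_card, ← Nat.card_congr (e2.trans e1)]
  rw [Finset.sum_congr rfl hfiber, Finset.sum_const, smul_eq_mul, mul_comm]

/-- Graph self-isomorphisms correspond to adjacency preserving permutations. -/
def isoEquivPermSubtype {m : ℕ} (A : SimpleGraph (Fin m)) :
    (A ≃g A) ≃ {e : Equiv.Perm (Fin m) // ∀ i j, A.Adj (e i) (e j) ↔ A.Adj i j} where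
  toFun f := ⟨f.toEquiv, fun i j => f.map_rel_iff⟩
  invFun e := ⟨e.1, e.2 _ _⟩
  left_inv f := rfl
  right_inv e := rfl

set_option maxRecDepth 20000 in
lemma autcard6 : Nat.card (squareWithTwoAdjacentTriangles ≃g squareWithTwoAdjacentTriangles) = 2 := by
  rw [Nat.card_congr (isoEquivPermSubtype _), Nat.card_eq_fintype_card]
  decide

lemma autcard4 : Nat.card (cycleGraph 4 ≃g cycleGraph 4) = 8 := by
  rw [Nat.card_congr (isoEquivPermSubtype _), Nat.card_eq_fintype_card]
  decide

end General

section SRG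

variable {G : SimpleGraph V} [DecidableRel G.Adj] {n k : ℕ}

lemma unique_common (h : G.IsSRGWith n k 1 2) {a b x y : V} (hab : G.Adj a b)
    (hxa : G.Adj x a) (hxb : G.Adj x b) (hya : G.Adj y a) (hyb : G.Adj y b) : x = y := by
  have hc := h.of_adj a b hab
  have hsub : Subsingleton (G.commonNeighbors a b) :=
    Fintype.card_le_one_iff_subsingleton.mp (le_of_eq hc)
  have hx : x ∈ G.commonNeighbors a b := (SimpleGraph.mem_commonNeighbors _).2 ⟨hxa.symm, hxb.symm⟩
  have hy : y ∈ G.commonNeighbors a b := (SimpleGraph.mem_commonNeighbors _).2 ⟨hya.symm, hyb.symm⟩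
  exact congrArg Subtype.val (@Subsingleton.elim _ hsub (⟨x, hx⟩ : G.commonNeighbors a b) ⟨y, hy⟩)

lemma exists_common (h : G.IsSRGWith n k 1 2) {a b : V} (hab : G.Adj a b) :
    ∃ x, G.Adj x a ∧ G.Adj x b := by
  have hc := h.of_adj a b hab
  have : Nonempty (G.commonNeighbors a b) := Fintype.card_pos_iff.mp (by omega)
  obtain ⟨⟨x, hx⟩⟩ := this
  rw [SimpleGraph.mem_commonNeighbors] at hx
  exact ⟨x, hx.1.symm, hx.2.symm⟩

lemma mem_pair_of_common (h : G.IsSRGWith n k 1 2) {a c b d x : V} (hne : a ≠ c)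
    (hn : ¬G.Adj a c) (hbd : b ≠ d) (hab : G.Adj a b) (hcb : G.Adj c b) (had : G.Adj a d)
    (hcd : G.Adj c d) (hax : G.Adj a x) (hcx : G.Adj c x) : x = b ∨ x = d := by
  by_contra hcon
  push_neg at hcon
  obtain ⟨hxb, hxd⟩ := hcon
  have hc := h.of_not_adj hne hn
  have hb' : b ∈ G.commonNeighbors a c := (SimpleGraph.mem_commonNeighbors _).2 ⟨hab, hcb⟩
  have hd' : d ∈ G.commonNeighbors a c := (SimpleGraph.mem_commonNeighbors _).2 ⟨had, hcd⟩
  have hx' : x ∈ G.commonNeighbors a c := (SimpleGraph.mem_commonNeighbors _).2 ⟨hax, hcx⟩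
  classical
  have h3 : ({⟨b, hb'⟩, ⟨d, hd'⟩, ⟨x, hx'⟩} : Finset (G.commonNeighbors a c)).card = 3 := by
    rw [Finset.card_insert_of_notMem (by simp [Subtype.ext_iff]; exact ⟨hbd, fun hh => hxb hh.symm⟩),
      Finset.card_insert_of_notMem (by simp [Subtype.ext_iff]; exact fun hh => hxd hh.symm),
      Finset.card_singleton]
  have hle := Finset.card_le_univ ({⟨b, hb'⟩, ⟨d, hd'⟩, ⟨x, hx'⟩} : Finset (G.commonNeighbors a c))
  rw [h3, hc] at hle
  omega

lemma c4_nonadj (h : G.IsSRGWith n k 1 2) {a c b d : V} (hne : a ≠ c) (hn : ¬G.Adj a c)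
    (hab : G.Adj a b) (hcb : G.Adj c b) (had : G.Adj a d) (hcd : G.Adj c d) : ¬G.Adj b d :=
  fun hadj => hne (unique_common h hadj hab had hcb hcd)


lemma isEmb4 {a b c d : V} (hab : G.Adj a b) (hbc : G.Adj b c)
    (hcd : G.Adj c d) (hda : G.Adj d a) (hac : ¬G.Adj a c) (hbd : ¬G.Adj b d)
    (hac' : a ≠ c) (hbd' : b ≠ d) :
    IsEmb G (cycleGraph 4) ![a, b, c, d] := by
  have hba := hab.symm; have hcb := hbc.symm; have hdc := hcd.symm; have had := hda.symm
  have hca : ¬G.Adj c a := fun hh => hac hh.symm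
  have hdb : ¬G.Adj d b := fun hh => hbd hh.symm
  have h1 : a ≠ b := hab.ne; have h2 : b ≠ c := hbc.ne; have h3 : c ≠ d := hcd.ne
  have h4 : d ≠ a := hda.ne; have h5 : b ≠ a := hba.ne; have h6 : c ≠ b := hcb.ne
  have h7 : d ≠ c := hdc.ne; have h8 : a ≠ d := had.ne; have h9 : c ≠ a := hac'.symm
  have h10 : d ≠ b := hbd'.symm
  constructor
  · intro i j hij
    fin_cases i <;> fin_cases j <;> first | rfl | exact absurd hij (by assumption)
  · intro i j
    fin_cases i <;> fin_cases j <;>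
      simp only [Matrix.cons_val_zero, Matrix.cons_val_one, Matrix.head_cons,
        Matrix.cons_val_two, Matrix.tail_cons, Matrix.cons_val_three] <;>
      first
        | exact iff_of_false G.irrefl (by decide)
        | exact iff_of_true (by assumption) (by decide)
        | exact iff_of_false (by assumption) (by decide)

-- edges of H: 01 12 23 30 04 14 15 25 ; nonedges: 02 13 05 24 34 35 45
lemma isEmb6 {a b c d e f : V}
    (hab : G.Adj a b) (hbc : G.Adj b c) (hcd : G.Adj c d) (hda : G.Adj d a)
    (hea : G.Adj e a) (heb : G.Adj e b) (hfb : G.Adj f b) (hfc : G.Adj f c)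
    (hac : ¬G.Adj a c) (hbd : ¬G.Adj b d) (haf : ¬G.Adj a f) (hce : ¬G.Adj c e)
    (hde : ¬G.Adj d e) (hdf : ¬G.Adj d f) (hef : ¬G.Adj e f)
    (hac' : a ≠ c) (hbd' : b ≠ d) (haf' : a ≠ f) (hce' : c ≠ e) (hde' : d ≠ e)
    (hdf' : d ≠ f) (hef' : e ≠ f) :
    IsEmb G squareWithTwoAdjacentTriangles ![a, b, c, d, e, f] := by
  have hba := hab.symm; have hcb := hbc.symm; have hdc := hcd.symm; have had := hda.symm
  have hae := hea.symm; have hbe := heb.symm; have hbf := hfb.symm; have hcf := hfc.symm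
  have hca : ¬G.Adj c a := fun hh => hac hh.symm
  have hdb : ¬G.Adj d b := fun hh => hbd hh.symm
  have hfa : ¬G.Adj f a := fun hh => haf hh.symm
  have hec : ¬G.Adj e c := fun hh => hce hh.symm
  have hed : ¬G.Adj e d := fun hh => hde hh.symm
  have hfd : ¬G.Adj f d := fun hh => hdf hh.symm
  have hfe : ¬G.Adj f e := fun hh => hef hh.symm
  have n1 : a ≠ b := hab.ne; have n2 : b ≠ c := hbc.ne; have n3 : c ≠ d := hcd.ne
  have n4 : d ≠ a := hda.ne; have n5 : e ≠ a := hea.ne; have n6 : e ≠ b := heb.ne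
  have n7 : f ≠ b := hfb.ne; have n8 : f ≠ c := hfc.ne
  have m1 := n1.symm; have m2 := n2.symm; have m3 := n3.symm; have m4 := n4.symm
  have m5 := n5.symm; have m6 := n6.symm; have m7 := n7.symm; have m8 := n8.symm
  have p1 := hac'.symm; have p2 := hbd'.symm; have p3 := haf'.symm; have p4 := hce'.symm
  have p5 := hde'.symm; have p6 := hdf'.symm; have p7 := hef'.symm
  constructor
  · intro i j hij
    fin_cases i <;> fin_cases j <;> first | rfl | exact absurd hij (by assumption)
  · intro i j
    fin_cases i <;> fin_cases j <;>
      simp only [Matrix.cons_val_zero, Matrix.cons_val_one, Matrix.head_cons,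
        Matrix.cons_val_two, Matrix.tail_cons, Matrix.cons_val_three,
        Matrix.cons_val_four, Matrix.cons_val_succ] <;>
      first
        | exact iff_of_false G.irrefl (by decide)
        | exact iff_of_true (by assumption) (by decide)
        | exact iff_of_false (by assumption) (by decide)

lemma le46 : (4 : ℕ) ≤ 6 := by norm_num

lemma emb6_card_eq_emb4_card (h : G.IsSRGWith n k 1 2) :
    Nat.card {φ : Fin 6 → V // IsEmb G squareWithTwoAdjacentTriangles φ} =
      Nat.card {ψ : Fin 4 → V // IsEmb G (cycleGraph 4) ψ} := by
  classical
  have hHC : ∀ i j : Fin 4, squareWithTwoAdjacentTriangles.Adj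
      (Fin.castLE le46 i) (Fin.castLE le46 j) ↔ (cycleGraph 4).Adj i j := by decide
  rw [Nat.card_eq_fintype_card, Nat.card_eq_fintype_card,
    Fintype.card_subtype, Fintype.card_subtype]
  apply Finset.card_bij (fun φ _ => fun j : Fin 4 => φ (Fin.castLE le46 j))
  · intro φ hφ
    rw [Finset.mem_filter] at hφ
    obtain ⟨-, hinj, hadj⟩ := hφ
    refine Finset.mem_filter.2 ⟨Finset.mem_univ _,
      fun i j hij => Fin.castLE_injective le46 (hinj hij), fun i j => ?_⟩
    rw [hadj]
    exact hHC i j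
  · intro φ hφ φ' hφ' hres
    rw [Finset.mem_filter] at hφ hφ'
    obtain ⟨-, hinj, hadj⟩ := hφ
    obtain ⟨-, hinj', hadj'⟩ := hφ'
    have hr : ∀ j : Fin 4, φ (Fin.castLE le46 j) = φ' (Fin.castLE le46 j) :=
      fun j => congrFun hres j
    have h0 : φ 0 = φ' 0 := hr 0
    have h1 : φ 1 = φ' 1 := hr 1
    have h2 : φ 2 = φ' 2 := hr 2
    have h3 : φ 3 = φ' 3 := hr 3
    have w0 := (hadj' 4 0).2 (by decide)
    have w1 := (hadj' 4 1).2 (by decide)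
    rw [← h0] at w0
    rw [← h1] at w1
    have v1 := (hadj' 5 1).2 (by decide)
    have v2 := (hadj' 5 2).2 (by decide)
    rw [← h1] at v1
    rw [← h2] at v2
    have e4 : φ 4 = φ' 4 := unique_common h ((hadj 0 1).2 (by decide))
      ((hadj 4 0).2 (by decide)) ((hadj 4 1).2 (by decide)) w0 w1
    have e5 : φ 5 = φ' 5 := unique_common h ((hadj 1 2).2 (by decide))
      ((hadj 5 1).2 (by decide)) ((hadj 5 2).2 (by decide)) v1 v2
    funext i
    fin_cases i
    exacts [h0, h1, h2, h3, e4, e5]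
  · intro ψ hψ
    rw [Finset.mem_filter] at hψ
    obtain ⟨-, hinj, hadj⟩ := hψ
    have hab : G.Adj (ψ 0) (ψ 1) := (hadj 0 1).2 (by decide)
    have hbc : G.Adj (ψ 1) (ψ 2) := (hadj 1 2).2 (by decide)
    have hcd : G.Adj (ψ 2) (ψ 3) := (hadj 2 3).2 (by decide)
    have hda : G.Adj (ψ 3) (ψ 0) := (hadj 3 0).2 (by decide)
    have hac : ¬G.Adj (ψ 0) (ψ 2) := fun hh => absurd ((hadj 0 2).1 hh) (by decide)
    have hbd : ¬G.Adj (ψ 1) (ψ 3) := fun hh => absurd ((hadj 1 3).1 hh) (by decide)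
    have hac' : ψ 0 ≠ ψ 2 := fun hh => absurd (hinj hh) (by decide)
    have hbd' : ψ 1 ≠ ψ 3 := fun hh => absurd (hinj hh) (by decide)
    obtain ⟨e, hea, heb⟩ := exists_common h hab
    obtain ⟨f, hfb, hfc⟩ := exists_common h hbc
    have heb' : e ≠ ψ 1 := heb.ne
    have hea' : e ≠ ψ 0 := hea.ne
    have hfb' : f ≠ ψ 1 := hfb.ne
    have hfc' : f ≠ ψ 2 := hfc.ne
    have hce' : ψ 2 ≠ e := fun hh => hac (by rw [hh]; exact hea.symm)
    have hde' : ψ 3 ≠ e := fun hh => hbd (by rw [hh]; exact heb.symm)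
    have haf' : ψ 0 ≠ f := fun hh => hac (by rw [hh]; exact hfc)
    have hdf' : ψ 3 ≠ f := fun hh => hbd (by rw [hh]; exact hfb.symm)
    have hce : ¬G.Adj (ψ 2) e := fun hh => by
      rcases mem_pair_of_common h hac' hac hbd' hab hbc.symm hda.symm hcd
        hea.symm hh with h' | h'
      · exact heb' h'
      · exact hde' h'.symm
    have hde : ¬G.Adj (ψ 3) e := fun hh => by
      rcases mem_pair_of_common h hbd' hbd hac' hab.symm hda hbc hcd.symm
        heb.symm hh with h' | h'
      · exact hea' h'
      · exact hce' h'.symm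
    have haf : ¬G.Adj (ψ 0) f := fun hh => by
      rcases mem_pair_of_common h hac' hac hbd' hab hbc.symm hda.symm hcd
        hh hfc.symm with h' | h'
      · exact hfb' h'
      · exact hdf' h'.symm
    have hdf : ¬G.Adj (ψ 3) f := fun hh => by
      rcases mem_pair_of_common h hbd' hbd hac' hab.symm hda hbc hcd.symm
        hfb.symm hh with h' | h'
      · exact haf' h'.symm
      · exact hfc' h'
    have hef' : e ≠ f := fun hh => hce (by rw [hh]; exact hfc.symm)
    have hef : ¬G.Adj e f := fun hh => by
      have : ψ 0 = f := unique_common h heb.symm hab hea.symm hfb hh.symm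
      exact haf' this
    refine ⟨![ψ 0, ψ 1, ψ 2, ψ 3, e, f], Finset.mem_filter.2 ⟨Finset.mem_univ _,
      isEmb6 hab hbc hcd hda hea heb hfb hfc hac hbd haf hce hde hdf hef
        hac' hbd' haf' hce' hde' hdf' hef'⟩, ?_⟩
    funext j
    fin_cases j <;> rfl

lemma emb4_card (h : G.IsSRGWith n k 1 2) :
    Nat.card {ψ : Fin 4 → V // IsEmb G (cycleGraph 4) ψ} = 2 * (n * (n - (k + 1))) := by
  classical
  rw [Nat.card_eq_fintype_card, Fintype.card_subtype]
  have hmem : ∀ ψ ∈ Finset.univ.filter (IsEmb G (cycleGraph 4)), (ψ 0, ψ 2) ∈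
      (Finset.univ.filter fun p : V × V => p.1 ≠ p.2 ∧ ¬G.Adj p.1 p.2) := by
    intro ψ hψ
    rw [Finset.mem_filter] at hψ
    obtain ⟨-, hinj, hadj⟩ := hψ
    exact Finset.mem_filter.2 ⟨Finset.mem_univ _,
      fun hh => absurd (hinj hh) (by decide),
      fun hh => absurd ((hadj 0 2).1 hh) (by decide)⟩
  rw [Finset.card_eq_sum_card_fiberwise hmem]
  have hfib : ∀ p ∈ (Finset.univ.filter fun p : V × V => p.1 ≠ p.2 ∧ ¬G.Adj p.1 p.2),
      ((Finset.univ.filter (IsEmb G (cycleGraph 4))).filter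
        fun ψ => (ψ 0, ψ 2) = p).card = 2 := by
    rintro ⟨a, c⟩ hp
    rw [Finset.mem_filter] at hp
    obtain ⟨-, hne, hn⟩ := hp
    have hcN := h.of_not_adj hne hn
    rw [← Nat.card_eq_fintype_card, Nat.card_eq_two_iff] at hcN
    obtain ⟨⟨b, hbm⟩, ⟨d, hdm⟩, hbdne, huniv⟩ := hcN
    have hbd' : b ≠ d := fun hh => hbdne (Subtype.ext hh)
    rw [SimpleGraph.mem_commonNeighbors] at hbm hdm
    have hmemz : ∀ z, G.Adj a z → G.Adj c z → z = b ∨ z = d := by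
      intro z hz1 hz2
      have hz : z ∈ G.commonNeighbors a c := (SimpleGraph.mem_commonNeighbors _).2 ⟨hz1, hz2⟩
      have : (⟨z, hz⟩ : G.commonNeighbors a c) ∈ ({⟨b, (SimpleGraph.mem_commonNeighbors _).2 hbm⟩,
          ⟨d, (SimpleGraph.mem_commonNeighbors _).2 hdm⟩} : Set (G.commonNeighbors a c)) := by
        rw [huniv]; trivial
      rcases this with h' | h'
      · exact Or.inl (congrArg Subtype.val h')
      · exact Or.inr (congrArg Subtype.val h')
    have hbdn : ¬G.Adj b d := c4_nonadj h hne hn hbm.1 hbm.2 hdm.1 hdm.2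
    have hset : ((Finset.univ.filter (IsEmb G (cycleGraph 4))).filter
        fun ψ => (ψ 0, ψ 2) = (a, c)) = {![a, b, c, d], ![a, d, c, b]} := by
      ext ψ
      simp only [Finset.mem_filter, Finset.mem_insert, Finset.mem_singleton,
        Prod.mk.injEq, Finset.mem_univ, true_and]
      constructor
      · rintro ⟨⟨hinj, hadj⟩, h0, h2⟩
        have hz1 := hmemz (ψ 1) (by rw [← h0]; exact (hadj 0 1).2 (by decide))
          (by rw [← h2]; exact ((hadj 1 2).2 (by decide)).symm)
        have hz3 := hmemz (ψ 3) (by rw [← h0]; exact ((hadj 3 0).2 (by decide)).symm)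
          (by rw [← h2]; exact (hadj 2 3).2 (by decide))
        have h13 : ψ 1 ≠ ψ 3 := fun hh => absurd (hinj hh) (by decide)
        rcases hz1 with h1 | h1
        · left
          rcases hz3 with h3 | h3
          · exact absurd (h1.trans h3.symm) h13
          · funext i; fin_cases i; exacts [h0, h1, h2, h3]
        · right
          rcases hz3 with h3 | h3
          · funext i; fin_cases i; exacts [h0, h1, h2, h3]
          · exact absurd (h1.trans h3.symm) h13
      · rintro (rfl | rfl)
        · exact ⟨isEmb4 hbm.1 hbm.2.symm hdm.2 hdm.1.symm hn hbdn hne hbd', rfl, rfl⟩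
        · refine ⟨isEmb4 hdm.1 hdm.2.symm hbm.2 hbm.1.symm hn
            (fun hh => hbdn hh.symm) hne hbd'.symm, rfl, rfl⟩
    rw [hset, Finset.card_insert_of_notMem, Finset.card_singleton]
    rw [Finset.mem_singleton]
    intro hh
    exact hbd' (congrFun hh 1)
  rw [Finset.sum_congr rfl hfib, Finset.sum_const, smul_eq_mul]
  have hNP : (Finset.univ.filter fun p : V × V => p.1 ≠ p.2 ∧ ¬G.Adj p.1 p.2).card
      = n * (n - (k + 1)) := by
    rw [Finset.card_eq_sum_card_fiberwise
      (f := Prod.fst) (t := Finset.univ) (fun p _ => Finset.mem_univ _)]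
    have hfa : ∀ a : V, ((Finset.univ.filter fun p : V × V => p.1 ≠ p.2 ∧ ¬G.Adj p.1 p.2).filter
        fun p => p.1 = a).card = n - (k + 1) := by
      intro a
      have hcb : ((Finset.univ.filter fun p : V × V => p.1 ≠ p.2 ∧ ¬G.Adj p.1 p.2).filter
          fun p => p.1 = a).card = (Finset.univ \ insert a (G.neighborFinset a)).card := by
        refine Finset.card_bij' (fun p _ => p.2) (fun c _ => (a, c)) ?_ ?_ ?_ ?_
        · intro p hp
          rw [Finset.mem_filter, Finset.mem_filter] at hp
          obtain ⟨⟨-, hne, hna⟩, h1⟩ := hp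
          rw [Finset.mem_sdiff]
          refine ⟨Finset.mem_univ _, fun hmem => ?_⟩
          rw [Finset.mem_insert, SimpleGraph.mem_neighborFinset] at hmem
          rcases hmem with hh | hh
          · exact hne (h1.trans hh.symm)
          · exact hna (by rw [h1]; exact hh)
        · intro c hc
          rw [Finset.mem_sdiff] at hc
          obtain ⟨-, hc2⟩ := hc
          rw [Finset.mem_filter, Finset.mem_filter]
          refine ⟨⟨Finset.mem_univ _, fun hh => ?_, fun hh => ?_⟩, rfl⟩
          · exact hc2 (by rw [Finset.mem_insert]; exact Or.inl hh.symm)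
          · exact hc2 (by rw [Finset.mem_insert, SimpleGraph.mem_neighborFinset]; exact Or.inr hh)
        · intro p hp
          rw [Finset.mem_filter] at hp
          exact Prod.ext hp.2.symm rfl
        · intro c hc
          rfl
      rw [hcb, Finset.card_sdiff_of_subset (Finset.subset_univ _), Finset.card_univ, h.card,
        Finset.card_insert_of_notMem (G.notMem_neighborFinset_self a),
        SimpleGraph.card_neighborFinset_eq_degree, h.regular a]
    rw [Finset.sum_congr rfl (fun a _ => hfa a), Finset.sum_const, smul_eq_mul,
      Finset.card_univ, h.card]
  rw [hNP, mul_comm]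

end SRG

end Stmt13Aux

theorem stmt_13 {V : Type*} [Fintype V] (G : SimpleGraph V) [DecidableRel G.Adj]
    {n k : ℕ} (h : G.IsSRGWith n k 1 2) :
    2 * Set.ncard {s : Finset V | s.card = 6 ∧
        Nonempty (G.induce (↑s : Set V) ≃g squareWithTwoAdjacentTriangles)} =
      n * k * (k - 2) ∧
    Set.ncard {s : Finset V | s.card = 6 ∧
        Nonempty (G.induce (↑s : Set V) ≃g squareWithTwoAdjacentTriangles)} =
      4 * inducedCycleCount G 4 := by
  classical
  have key6 := Stmt13Aux.card_emb_eq_aut_mul G squareWithTwoAdjacentTriangles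
  have key4 := Stmt13Aux.card_emb_eq_aut_mul G (SimpleGraph.cycleGraph 4)
  rw [Stmt13Aux.autcard6] at key6
  rw [Stmt13Aux.autcard4] at key4
  have h64 := Stmt13Aux.emb6_card_eq_emb4_card h
  have h4c := Stmt13Aux.emb4_card h
  set A := Set.ncard {s : Finset V | s.card = 6 ∧
      Nonempty (G.induce (↑s : Set V) ≃g squareWithTwoAdjacentTriangles)} with hA
  have hCdef : inducedCycleCount G 4 = Set.ncard {s : Finset V | s.card = 4 ∧
      Nonempty (G.induce (↑s : Set V) ≃g SimpleGraph.cycleGraph 4)} := rfl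
  set C := Set.ncard {s : Finset V | s.card = 4 ∧
      Nonempty (G.induce (↑s : Set V) ≃g SimpleGraph.cycleGraph 4)} with hC
  rw [h64, h4c] at key6
  rw [h4c] at key4
  -- key6 : 2 * (n * (n - (k+1))) = 2 * A
  -- key4 : 2 * (n * (n - (k+1))) = 8 * C
  have hkey : 2 * A = 8 * C := key6.symm.trans key4
  constructor
  · rcases Nat.eq_zero_or_pos n with hn | hn
    · subst hn
      simp only [Nat.zero_mul, zero_mul, Nat.mul_zero, mul_zero] at key6 ⊢
      omega
    · have hp := SimpleGraph.IsSRGWith.param_eq G h hn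
      rw [show k - 1 - 1 = k - 2 from by omega] at hp
      have e1 : n - (k + 1) = n - k - 1 := by omega
      rw [e1] at key6
      calc 2 * A = 2 * (n * (n - k - 1)) := key6.symm
        _ = n * ((n - k - 1) * 2) := by ring
        _ = n * (k * (k - 2)) := by rw [← hp]
        _ = n * k * (k - 2) := by rw [mul_assoc]
  · rw [hCdef]
    omega
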